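/- Assume supp(ν) ⊂ U_ν. For every t ∈ ℝ \ (closure(U_ν) ∪ Θ): for all N large enough v_N(t) = 0 and Ψ_N(t) = H_N(t) = t + ∫ dμ_{A_N}(x)/(t−x), and Ψ_N(t) converges to Ψ_ν(t) = H_ν(t) as N → ∞. -/

import Mathlib

open MeasureTheory Filter Topology Set
open scoped ENNReal

/-- `v_μ(u) = inf {v ≥ 0 : ∫ dμ(x)/((u−x)² + v²) ≤ 1}`. -/
noncomputable def vF (μ : Measure ℝ) (u : ℝ) : ℝ :=
  sInf {v : ℝ | 0 ≤ v ∧ ∫ x, ((u - x) ^ 2 + v ^ 2)⁻¹ ∂μ ≤ 1}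

/-- `U_μ = {t : v_μ(t) > 0}`. -/
def USet (μ : Measure ℝ) : Set ℝ := {t | 0 < vF μ t}

/-- `H_μ(z) = z + ∫ dμ(x)/(z−x)`. -/
noncomputable def HF (μ : Measure ℝ) (z : ℝ) : ℝ := z + ∫ x, (z - x)⁻¹ ∂μ

/-- `Ψ_μ(t) = t + ∫ (t−x) dμ(x)/((t−x)² + v_μ(t)²)`. -/
noncomputable def PsiF (μ : Measure ℝ) (t : ℝ) : ℝ :=
  t + ∫ x, (t - x) / ((t - x) ^ 2 + vF μ t ^ 2) ∂μ

/-- The (topological) support of a measure on ℝ. -/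
def MeasSupp (μ : Measure ℝ) : Set ℝ := {x | ∀ U ∈ nhds x, μ U ≠ 0}

/-- `ν̂_N = (1/(N−r)) Σ_{j=1}^{N−r} δ_{β_j(N)}`. -/
noncomputable def hatNu (r : ℕ) (β : ℕ → ℕ → ℝ) (N : ℕ) : Measure ℝ :=
  ((N - r : ℕ) : ℝ≥0∞)⁻¹ • ∑ i ∈ Finset.range (N - r), Measure.dirac (β N i)

lemma vF_nonneg (μ : Measure ℝ) (u : ℝ) : 0 ≤ vF μ u :=
  Real.sInf_nonneg fun _ hx => hx.1

lemma vF_eq_zero {μ : Measure ℝ} {u : ℝ} (h : u ∉ USet μ) : vF μ u = 0 :=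
  le_antisymm (not_lt.mp h) (vF_nonneg μ u)

lemma self_div_sq (a b : ℝ) (hb : b = 0) : a / (a ^ 2 + b ^ 2) = a⁻¹ := by
  subst hb
  rcases eq_or_ne a 0 with rfl | h
  · simp
  · rw [ne_eq] at h; field_simp; ring

lemma PsiF_eq_of_vF_zero {μ : Measure ℝ} {u : ℝ} (h : vF μ u = 0) : PsiF μ u = HF μ u := by
  unfold PsiF HF
  congr 1
  exact integral_congr_ae (Filter.Eventually.of_forall fun x => self_div_sq _ _ h)

lemma measSupp_compl_null (μ : Measure ℝ) : μ (MeasSupp μ)ᶜ = 0 := by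
  have h : ∀ x : ((MeasSupp μ)ᶜ : Set ℝ), ∃ U : Set ℝ, IsOpen U ∧ (x : ℝ) ∈ U ∧ μ U = 0 := by
    rintro ⟨x, hx⟩
    simp only [MeasSupp, mem_compl_iff, mem_setOf_eq, not_forall] at hx
    obtain ⟨U, hU, hU0⟩ := hx
    exact ⟨interior U, isOpen_interior, mem_interior_iff_mem_nhds.mpr hU,
      measure_mono_null interior_subset (by simpa using hU0)⟩
  choose U hUo hUx hU0 using h
  obtain ⟨T, hTc, hTU⟩ := TopologicalSpace.isOpen_iUnion_countable U hUo
  refine measure_mono_null (fun x hx => ?_) ((measure_biUnion_null_iff hTc).mpr fun i _ => hU0 i)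
  rw [hTU]
  exact mem_iUnion.mpr ⟨⟨x, hx⟩, hUx _⟩

lemma inv_sq_strict_convex {a δ : ℝ} (hδ : 0 < δ) (h : δ < |a|) :
    (a ^ 2)⁻¹ < (((a - δ) ^ 2)⁻¹ + ((a + δ) ^ 2)⁻¹) / 2 := by
  have h2 : δ ^ 2 < a ^ 2 := by
    nlinarith [sq_abs a, mul_pos (sub_pos.mpr h) (by positivity : (0:ℝ) < |a| + δ)]
  have ha : a ≠ 0 := fun h0 => by simp [h0] at h2; nlinarith
  have ham : a - δ ≠ 0 := fun h0 => by nlinarith [sq_nonneg (a - δ)]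
  have hap : a + δ ≠ 0 := fun h0 => by nlinarith [sq_nonneg (a + δ)]
  have hA : 0 < a ^ 2 := lt_of_le_of_ne (sq_nonneg a) (Ne.symm (pow_ne_zero 2 ha))
  have hM : 0 < (a - δ) ^ 2 := lt_of_le_of_ne (sq_nonneg _) (Ne.symm (pow_ne_zero 2 ham))
  have hP : 0 < (a + δ) ^ 2 := lt_of_le_of_ne (sq_nonneg _) (Ne.symm (pow_ne_zero 2 hap))
  have key : (((a - δ) ^ 2)⁻¹ + ((a + δ) ^ 2)⁻¹) / 2 - (a ^ 2)⁻¹ =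
      δ ^ 2 * (3 * a ^ 2 - δ ^ 2) / (a ^ 2 * ((a - δ) ^ 2 * (a + δ) ^ 2)) := by
    field_simp
    ring
  have hpos : 0 < δ ^ 2 * (3 * a ^ 2 - δ ^ 2) / (a ^ 2 * ((a - δ) ^ 2 * (a + δ) ^ 2)) :=
    div_pos (mul_pos (pow_pos hδ 2) (by linarith)) (by positivity)
  linarith [key ▸ hpos]

lemma integrable_dirac'' (f : ℝ → ℝ) (a : ℝ) : Integrable f (Measure.dirac a) := by
  have h : f =ᵐ[Measure.dirac a] fun _ => f a := by
    rw [MeasureTheory.ae_dirac_eq]; exact Filter.eventually_pure.mpr rfl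
  exact (integrable_const (f a)).congr h.symm

lemma integral_atomic (N nb : ℕ) {J : ℕ} (θ : Fin J → ℝ) (k : Fin J → ℕ) (b : ℕ → ℝ)
    (f : ℝ → ℝ) :
    ∫ x, f x ∂((N : ℝ≥0∞)⁻¹ • ((∑ j, (k j : ℝ≥0∞) • Measure.dirac (θ j)) +
        ∑ i ∈ Finset.range nb, Measure.dirac (b i))) =
      (N : ℝ)⁻¹ * ((∑ j, (k j : ℝ) * f (θ j)) + ∑ i ∈ Finset.range nb, f (b i)) := by
  have h1 : ∀ j : Fin J, Integrable f ((k j : ℝ≥0∞) • Measure.dirac (θ j)) := fun j =>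
    (integrable_dirac'' f (θ j)).smul_measure (by simp)
  have h2 : ∀ i ∈ Finset.range nb, Integrable f (Measure.dirac (b i)) := fun i _ =>
    integrable_dirac'' f (b i)
  rw [integral_smul_measure, integral_add_measure
      (integrable_finset_sum_measure.mpr fun j _ => h1 j)
      (integrable_finset_sum_measure.mpr h2),
    integral_finset_sum_measure (fun j _ => h1 j), integral_finset_sum_measure h2]
  simp [integral_smul_measure, integral_dirac, smul_eq_mul, ENNReal.toReal_inv]

lemma integral_inv_sq_le_one (ν : Measure ℝ) [IsProbabilityMeasure ν] {s m : ℝ}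
    (hs : s ∉ USet ν) (hm : 0 < m) (hdist : ∀ᵐ x ∂ν, m ≤ |s - x|) :
    Integrable (fun x => ((s - x) ^ 2)⁻¹) ν ∧ ∫ x, ((s - x) ^ 2)⁻¹ ∂ν ≤ 1 := by
  have hmeas : ∀ v : ℝ, AEStronglyMeasurable (fun x => ((s - x) ^ 2 + v ^ 2)⁻¹) ν := by
    intro v
    exact (((measurable_const.sub measurable_id).pow_const 2).add_const (v ^ 2)).inv.aestronglyMeasurable
  have hboundae : ∀ v : ℝ, ∀ᵐ x ∂ν, ‖((s - x) ^ 2 + v ^ 2)⁻¹‖ ≤ (m ^ 2)⁻¹ := by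
    intro v
    filter_upwards [hdist] with x hx
    have h1 : m ^ 2 ≤ (s - x) ^ 2 + v ^ 2 := by
      have : m ^ 2 ≤ (s - x) ^ 2 := by nlinarith [abs_nonneg (s - x), sq_abs (s - x)]
      nlinarith [sq_nonneg v]
    have h0 : (0:ℝ) ≤ ((s - x) ^ 2 + v ^ 2)⁻¹ := by positivity
    rw [Real.norm_eq_abs, abs_of_nonneg h0]
    exact inv_anti₀ (by positivity) h1
  have hint : ∀ v : ℝ, Integrable (fun x => ((s - x) ^ 2 + v ^ 2)⁻¹) ν := fun v =>
    Integrable.mono' (integrable_const ((m ^ 2)⁻¹)) (hmeas v) (hboundae v)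
  have hv : ∀ v : ℝ, 0 < v → ∫ x, ((s - x) ^ 2 + v ^ 2)⁻¹ ∂ν ≤ 1 := by
    intro v hv0
    have hone : (1:ℝ) ∈ {v : ℝ | 0 ≤ v ∧ ∫ x, ((s - x) ^ 2 + v ^ 2)⁻¹ ∂ν ≤ 1} := by
      refine ⟨zero_le_one, ?_⟩
      calc ∫ x, ((s - x) ^ 2 + 1 ^ 2)⁻¹ ∂ν ≤ ∫ _x, (1:ℝ) ∂ν := by
            refine integral_mono (hint 1) (integrable_const 1) fun x => ?_
            rw [inv_le_one_iff₀]
            right; nlinarith [sq_nonneg (s - x)]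
        _ = 1 := by simp
    have hbdd : BddBelow {v : ℝ | 0 ≤ v ∧ ∫ x, ((s - x) ^ 2 + v ^ 2)⁻¹ ∂ν ≤ 1} :=
      ⟨0, fun x hx => hx.1⟩
    have h0 : vF ν s = 0 := vF_eq_zero hs
    have : sInf {v : ℝ | 0 ≤ v ∧ ∫ x, ((s - x) ^ 2 + v ^ 2)⁻¹ ∂ν ≤ 1} < v := by
      rw [show sInf _ = vF ν s from rfl, h0]; exact hv0
    obtain ⟨w, hwS, hwv⟩ := (csInf_lt_iff hbdd ⟨1, hone⟩).mp this
    calc ∫ x, ((s - x) ^ 2 + v ^ 2)⁻¹ ∂ν ≤ ∫ x, ((s - x) ^ 2 + w ^ 2)⁻¹ ∂ν := by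
          refine integral_mono_ae (hint v) (hint w) ?_
          filter_upwards [hdist] with x hx
          have hsq : m ^ 2 ≤ (s - x) ^ 2 := by nlinarith [sq_abs (s - x), abs_nonneg (s - x)]
          apply inv_anti₀
          · nlinarith [sq_nonneg w]
          · nlinarith [hwS.1]
      _ ≤ 1 := hwS.2
  have hIf : Integrable (fun x => ((s - x) ^ 2)⁻¹) ν := by
    have := hint 0
    simpa using this
  refine ⟨hIf, ?_⟩
  have hlim : Tendsto (fun n : ℕ => ∫ x, ((s - x) ^ 2 + (((n : ℝ) + 1)⁻¹) ^ 2)⁻¹ ∂ν) atTop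
      (𝓝 (∫ x, ((s - x) ^ 2)⁻¹ ∂ν)) := by
    refine tendsto_integral_of_dominated_convergence (fun _ => (m ^ 2)⁻¹)
      (fun n => hmeas _) (integrable_const _) (fun n => hboundae _) ?_
    filter_upwards [hdist] with x hx
    have hne : (s - x) ^ 2 ≠ 0 := by
      have : 0 < (s - x) ^ 2 := by nlinarith [sq_abs (s - x), abs_nonneg (s - x)]
      exact this.ne'
    have h1 : Tendsto (fun n : ℕ => ((n : ℝ) + 1)⁻¹) atTop (𝓝 0) := by
      have := tendsto_natCast_atTop_atTop (R := ℝ)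
      exact (this.atTop_add tendsto_const_nhds).inv_tendsto_atTop
    have h2 : Tendsto (fun n : ℕ => (s - x) ^ 2 + (((n : ℝ) + 1)⁻¹) ^ 2) atTop
        (𝓝 ((s - x) ^ 2 + 0 ^ 2)) := tendsto_const_nhds.add ((h1.pow 2))
    have := h2.inv₀ (by simpa using hne)
    simpa using this
  refine le_of_tendsto hlim (Filter.Eventually.of_forall fun n => hv _ (by positivity))

/-- assume `supp(ν) ⊆ U_ν`.  For `t ∉ closure(U_ν) ∪ Θ`: for all large `N`,
`v_N(t) = 0` and `Ψ_N(t) = H_N(t) = t + ∫ dμ_{A_N}(x)/(t−x)`, and `Ψ_N(t) → Ψ_ν(t) = H_ν(t)`. -/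
theorem stmt9
    (ν : Measure ℝ) [IsProbabilityMeasure ν] (hcomp : IsCompact (MeasSupp ν))
    (J r : ℕ) (θ : Fin J → ℝ) (k : Fin J → ℕ)
    (hθanti : StrictAnti θ) (hθsupp : ∀ j, θ j ∉ MeasSupp ν)
    (hkpos : ∀ j, 0 < k j) (hkr : ∑ j, k j = r)
    (β : ℕ → ℕ → ℝ) (μA : ℕ → Measure ℝ)
    (hprob : ∀ N, IsProbabilityMeasure (μA N))
    (hdecomp : ∀ N, r ≤ N → μA N = (N : ℝ≥0∞)⁻¹ •
      ((∑ j, (k j : ℝ≥0∞) • Measure.dirac (θ j)) +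
        ∑ i ∈ Finset.range (N - r), Measure.dirac (β N i)))
    (hweak : ∀ f : BoundedContinuousFunction ℝ ℝ,
      Tendsto (fun N => ∫ x, f x ∂(μA N)) atTop (𝓝 (∫ x, f x ∂ν)))
    (hβ : ∀ ε > 0, ∀ᶠ N in atTop, ∀ i ∈ Finset.range (N - r),
      Metric.infDist (β N i) (MeasSupp ν) < ε)
    (hsuppU : MeasSupp ν ⊆ USet ν)
    (t : ℝ) (ht : t ∉ closure (USet ν) ∪ Set.range θ) :
    (∀ᶠ N in atTop, vF (μA N) t = 0 ∧
      PsiF (μA N) t = HF (μA N) t ∧ HF (μA N) t = t + ∫ x, (t - x)⁻¹ ∂(μA N)) ∧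
    PsiF ν t = HF ν t ∧
    Tendsto (fun N => PsiF (μA N) t) atTop (𝓝 (PsiF ν t)) := by
  classical
  have hKnull : ν (MeasSupp ν)ᶜ = 0 := measSupp_compl_null ν
  have haeK : ∀ᵐ x ∂ν, x ∈ MeasSupp ν := by
    rw [ae_iff]
    exact hKnull
  have hKne : (MeasSupp ν).Nonempty := by
    rcases Set.eq_empty_or_nonempty (MeasSupp ν) with h | h
    · exfalso
      have h1 : ν univ = 0 := by
        have : (univ : Set ℝ) = (MeasSupp ν)ᶜ := by rw [h, compl_empty]
        rw [this]; exact hKnull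
      simp [measure_univ] at h1
    · exact h
  have htU : t ∉ closure (USet ν) := fun h => ht (Or.inl h)
  have htU' : t ∉ USet ν := fun h => htU (subset_closure h)
  set d := Metric.infDist t (USet ν) with hddef
  have hUne : (USet ν).Nonempty := ⟨hKne.choose, hsuppU hKne.choose_spec⟩
  have hd : 0 < d := by
    have := (isClosed_closure.notMem_iff_infDist_pos hUne.closure).mp htU
    rwa [Metric.infDist_closure] at this
  set c := d / 2 with hcdef
  have hcpos : 0 < c := by rw [hcdef]; linarith
  have hcd : c < d := by rw [hcdef]; linarith
  have hdistU : ∀ u ∈ USet ν, d ≤ dist t u := fun u hu => Metric.infDist_le_dist_of_mem hu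
  have hdistK : ∀ x ∈ MeasSupp ν, d ≤ |t - x| := fun x hx => by
    have := hdistU x (hsuppU hx)
    rwa [Real.dist_eq] at this
  have haedist : ∀ᵐ x ∂ν, d ≤ |t - x| := haeK.mono fun x hx => hdistK x hx
  have hnotU : ∀ s : ℝ, dist t s < d → s ∉ USet ν := fun s hlt hmem =>
    absurd (hdistU s hmem) (not_le.mpr hlt)
  -- integral bounds at t, t ± c
  have hf := integral_inv_sq_le_one ν htU' hd haedist
  have hmn : ∀ᵐ x ∂ν, c ≤ |t - c - x| := by
    filter_upwards [haedist] with x hx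
    have e : t - c - x = (t - x) - c := by ring
    rw [e]
    have h1 := abs_sub_abs_le_abs_sub (t - x) c
    have h2 : |c| = c := abs_of_nonneg hcpos.le
    have h3 : c + c ≤ d + d := by linarith
    rw [hcdef] at *
    linarith
  have hmp : ∀ᵐ x ∂ν, c ≤ |t + c - x| := by
    filter_upwards [haedist] with x hx
    have e : t + c - x = (t - x) - (-c) := by ring
    rw [e]
    have h1 := abs_sub_abs_le_abs_sub (t - x) (-c)
    have h2 : |(-c)| = c := by rw [abs_neg]; exact abs_of_nonneg hcpos.le
    rw [hcdef] at *
    linarith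
  have hdistn : dist t (t - c) < d := by
    rw [Real.dist_eq, show t - (t - c) = c by ring, abs_of_nonneg hcpos.le]
    exact hcd
  have hdistp : dist t (t + c) < d := by
    rw [Real.dist_eq, show t - (t + c) = -c by ring, abs_neg, abs_of_nonneg hcpos.le]
    exact hcd
  have hn := integral_inv_sq_le_one ν (hnotU _ hdistn) hcpos hmn
  have hp := integral_inv_sq_le_one ν (hnotU _ hdistp) hcpos hmp
  -- strict inequality ∫ (t-x)⁻² dν < 1
  have hφint : Integrable
      (fun x => (((t - c - x) ^ 2)⁻¹ + ((t + c - x) ^ 2)⁻¹) / 2 - ((t - x) ^ 2)⁻¹) ν :=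
    ((hn.1.add hp.1).div_const 2).sub hf.1
  have hφpos : ∀ᵐ x ∂ν,
      0 < (((t - c - x) ^ 2)⁻¹ + ((t + c - x) ^ 2)⁻¹) / 2 - ((t - x) ^ 2)⁻¹ := by
    filter_upwards [haedist] with x hx
    have h1 : c < |t - x| := lt_of_lt_of_le hcd hx
    have hkey := inv_sq_strict_convex hcpos h1
    have e1 : t - c - x = (t - x) - c := by ring
    have e2 : t + c - x = (t - x) + c := by ring
    rw [e1, e2]
    linarith
  have hφnn : 0 ≤ᵐ[ν]
      fun x => (((t - c - x) ^ 2)⁻¹ + ((t + c - x) ^ 2)⁻¹) / 2 - ((t - x) ^ 2)⁻¹ :=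
    hφpos.mono fun x hx => hx.le
  have hφI : 0 < ∫ x, ((((t - c - x) ^ 2)⁻¹ + ((t + c - x) ^ 2)⁻¹) / 2 - ((t - x) ^ 2)⁻¹) ∂ν := by
    rcases lt_or_eq_of_le (integral_nonneg_of_ae hφnn) with h | h
    · exact h
    · exfalso
      have h0 := (integral_eq_zero_iff_of_nonneg_ae hφnn hφint).mp h.symm
      haveI : (ae ν).NeBot := MeasureTheory.ae_neBot.mpr (IsProbabilityMeasure.ne_zero ν)
      obtain ⟨x, hx1, hx2⟩ := (hφpos.and h0).exists
      simp only [Pi.zero_apply] at hx2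
      exact absurd hx2 hx1.ne'
  have hIφ_eq : ∫ x, ((((t - c - x) ^ 2)⁻¹ + ((t + c - x) ^ 2)⁻¹) / 2 - ((t - x) ^ 2)⁻¹) ∂ν =
      (∫ x, ((t - c - x) ^ 2)⁻¹ ∂ν + ∫ x, ((t + c - x) ^ 2)⁻¹ ∂ν) / 2
        - ∫ x, ((t - x) ^ 2)⁻¹ ∂ν := by
    have hI1 : Integrable (fun x => (((t - c - x) ^ 2)⁻¹ + ((t + c - x) ^ 2)⁻¹) / 2) ν :=
      (hn.1.add hp.1).div_const 2
    rw [integral_sub hI1 hf.1, integral_div, integral_add hn.1 hp.1]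
  have hlt : ∫ x, ((t - x) ^ 2)⁻¹ ∂ν < 1 := by
    rw [hIφ_eq] at hφI
    linarith [hn.2, hp.2]
  -- the bounded continuous truncations
  have hmaxpos : ∀ x : ℝ, 0 < max |t - x| c := fun x => lt_max_of_lt_right hcpos
  have hcont2 : Continuous (fun x : ℝ => ((max |t - x| c) ^ 2)⁻¹) := by
    apply Continuous.inv₀
    · exact ((continuous_const.sub continuous_id).abs.max continuous_const).pow 2
    · intro x; exact (pow_pos (hmaxpos x) 2).ne'
  have hcont1 : Continuous (fun x : ℝ => (t - x) * ((max |t - x| c) ^ 2)⁻¹) :=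
    (continuous_const.sub continuous_id).mul hcont2
  have hbd2 : ∀ x : ℝ, ‖((max |t - x| c) ^ 2)⁻¹‖ ≤ (c ^ 2)⁻¹ := fun x => by
    rw [Real.norm_eq_abs, abs_of_nonneg (by positivity)]
    exact inv_anti₀ (by positivity) (pow_le_pow_left₀ hcpos.le (le_max_right _ _) 2)
  have hbd1 : ∀ x : ℝ, ‖(t - x) * ((max |t - x| c) ^ 2)⁻¹‖ ≤ c⁻¹ := fun x => by
    rw [Real.norm_eq_abs, abs_mul,
      abs_of_nonneg (show (0:ℝ) ≤ ((max |t - x| c) ^ 2)⁻¹ by positivity)]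
    calc |t - x| * ((max |t - x| c) ^ 2)⁻¹ ≤ (max |t - x| c) * ((max |t - x| c) ^ 2)⁻¹ :=
          mul_le_mul_of_nonneg_right (le_max_left _ _) (by positivity)
      _ = (max |t - x| c)⁻¹ := by
          rw [sq, mul_inv, ← mul_assoc, mul_inv_cancel₀ (hmaxpos x).ne', one_mul]
      _ ≤ c⁻¹ := inv_anti₀ hcpos (le_max_right _ _)
  have hconv₂ : Tendsto (fun N => ∫ x, ((max |t - x| c) ^ 2)⁻¹ ∂(μA N)) atTop
      (𝓝 (∫ x, ((max |t - x| c) ^ 2)⁻¹ ∂ν)) := by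
    have := hweak (BoundedContinuousFunction.ofNormedAddCommGroup _ hcont2 _ hbd2)
    simpa using this
  have hconv₁ : Tendsto (fun N => ∫ x, (t - x) * ((max |t - x| c) ^ 2)⁻¹ ∂(μA N)) atTop
      (𝓝 (∫ x, (t - x) * ((max |t - x| c) ^ 2)⁻¹ ∂ν)) := by
    have := hweak (BoundedContinuousFunction.ofNormedAddCommGroup _ hcont1 _ hbd1)
    simpa using this
  have hg₂eq : ∀ x : ℝ, c ≤ |t - x| → ((max |t - x| c) ^ 2)⁻¹ = ((t - x) ^ 2)⁻¹ := fun x hx => by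
    rw [max_eq_left hx, sq_abs]
  have hg₁eq : ∀ x : ℝ, c ≤ |t - x| → (t - x) * ((max |t - x| c) ^ 2)⁻¹ = (t - x)⁻¹ :=
    fun x hx => by
    have hne : t - x ≠ 0 := by
      intro h0
      rw [h0, abs_zero] at hx
      linarith
    rw [max_eq_left hx, sq_abs, sq, mul_inv, ← mul_assoc, mul_inv_cancel₀ hne, one_mul]
  have haec : ∀ᵐ x ∂ν, c ≤ |t - x| := haedist.mono fun x hx => le_trans hcd.le hx
  have hν₂ : ∫ x, ((max |t - x| c) ^ 2)⁻¹ ∂ν = ∫ x, ((t - x) ^ 2)⁻¹ ∂ν :=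
    integral_congr_ae (haec.mono fun x hx => hg₂eq x hx)
  have hν₁ : ∫ x, (t - x) * ((max |t - x| c) ^ 2)⁻¹ ∂ν = ∫ x, (t - x)⁻¹ ∂ν :=
    integral_congr_ae (haec.mono fun x hx => hg₁eq x hx)
  set C₂ : ℝ := ∑ j, (k j : ℝ) * (((t - θ j) ^ 2 + 0 ^ 2)⁻¹ - ((max |t - θ j| c) ^ 2)⁻¹)
    with hC2
  set C₁ : ℝ := ∑ j, (k j : ℝ) * ((t - θ j)⁻¹ - (t - θ j) * ((max |t - θ j| c) ^ 2)⁻¹)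
    with hC1
  have hev_lt : ∀ᶠ N : ℕ in atTop,
      ∫ x, ((max |t - x| c) ^ 2)⁻¹ ∂(μA N) + (N : ℝ)⁻¹ * C₂ < 1 := by
    have h2 : Tendsto
        (fun N : ℕ => ∫ x, ((max |t - x| c) ^ 2)⁻¹ ∂(μA N) + (N : ℝ)⁻¹ * C₂) atTop
        (𝓝 (∫ x, ((t - x) ^ 2)⁻¹ ∂ν + 0 * C₂)) := by
      rw [hν₂] at hconv₂
      exact hconv₂.add (tendsto_inv_atTop_nhds_zero_nat.mul_const C₂)
    rw [zero_mul, add_zero] at h2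
    exact h2.eventually_lt_const hlt
  have hev_β : ∀ᶠ N : ℕ in atTop, ∀ i ∈ Finset.range (N - r), c ≤ |t - β N i| := by
    filter_upwards [hβ c hcpos] with N hN i hi
    have h1 := hN i hi
    have h2 : d ≤ Metric.infDist t (MeasSupp ν) := by
      rw [hddef]
      exact Metric.infDist_le_infDist_of_subset hsuppU hKne
    have h3 : Metric.infDist t (MeasSupp ν) ≤
        Metric.infDist (β N i) (MeasSupp ν) + dist t (β N i) :=
      Metric.infDist_le_infDist_add_dist
    rw [Real.dist_eq] at h3
    rw [hcdef] at *
    linarith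
  have hformula : ∀ N : ℕ, r ≤ N → ∀ f : ℝ → ℝ,
      ∫ x, f x ∂(μA N) = (N : ℝ)⁻¹ *
        ((∑ j, (k j : ℝ) * f (θ j)) + ∑ i ∈ Finset.range (N - r), f (β N i)) := by
    intro N hN f
    rw [hdecomp N hN]
    exact integral_atomic N (N - r) θ k (β N) f
  -- main eventual statement
  have hmain : ∀ᶠ N : ℕ in atTop, vF (μA N) t = 0 ∧ PsiF (μA N) t = HF (μA N) t ∧
      HF (μA N) t = t + ∫ x, (t - x)⁻¹ ∂(μA N) := by
    filter_upwards [eventually_ge_atTop r, hev_β, hev_lt] with N hNr hNβ hNlt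
    have heq₂ : ∫ x, ((t - x) ^ 2 + 0 ^ 2)⁻¹ ∂(μA N) =
        ∫ x, ((max |t - x| c) ^ 2)⁻¹ ∂(μA N) + (N : ℝ)⁻¹ * C₂ := by
      rw [hformula N hNr (fun x => ((t - x) ^ 2 + 0 ^ 2)⁻¹),
        hformula N hNr (fun x => ((max |t - x| c) ^ 2)⁻¹)]
      have hsb : ∑ i ∈ Finset.range (N - r), ((t - β N i) ^ 2 + 0 ^ 2)⁻¹ =
          ∑ i ∈ Finset.range (N - r), ((max |t - β N i| c) ^ 2)⁻¹ :=
        Finset.sum_congr rfl fun i hi => by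
          rw [show (0:ℝ) ^ 2 = 0 by norm_num, add_zero, ← hg₂eq _ (hNβ i hi)]
      have hsθ : ∑ j, (k j : ℝ) * ((t - θ j) ^ 2 + 0 ^ 2)⁻¹ =
          ∑ j, ((k j : ℝ) * ((max |t - θ j| c) ^ 2)⁻¹ +
            (k j : ℝ) * (((t - θ j) ^ 2 + 0 ^ 2)⁻¹ - ((max |t - θ j| c) ^ 2)⁻¹)) :=
        Finset.sum_congr rfl fun j _ => by ring
      rw [hsb, hsθ, Finset.sum_add_distrib, hC2]
      ring
    have h0mem : (0:ℝ) ∈ {v : ℝ | 0 ≤ v ∧ ∫ x, ((t - x) ^ 2 + v ^ 2)⁻¹ ∂(μA N) ≤ 1} :=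
      ⟨le_refl 0, by rw [heq₂]; exact hNlt.le⟩
    have h0 : vF (μA N) t = 0 :=
      le_antisymm (csInf_le ⟨0, fun v hv => hv.1⟩ h0mem) (vF_nonneg _ _)
    exact ⟨h0, PsiF_eq_of_vF_zero h0, rfl⟩
  have hν0 : vF ν t = 0 := vF_eq_zero htU'
  have hPsiν : PsiF ν t = HF ν t := PsiF_eq_of_vF_zero hν0
  refine ⟨hmain, hPsiν, ?_⟩
  -- convergence
  have hlim : Tendsto (fun N : ℕ =>
      t + (∫ x, (t - x) * ((max |t - x| c) ^ 2)⁻¹ ∂(μA N) + (N : ℝ)⁻¹ * C₁)) atTop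
      (𝓝 (t + (∫ x, (t - x)⁻¹ ∂ν + 0 * C₁))) := by
    apply tendsto_const_nhds.add
    rw [hν₁] at hconv₁
    exact hconv₁.add (tendsto_inv_atTop_nhds_zero_nat.mul_const C₁)
  rw [zero_mul, add_zero] at hlim
  have hPt : PsiF ν t = t + ∫ x, (t - x)⁻¹ ∂ν := hPsiν
  rw [hPt]
  refine hlim.congr' ?_
  filter_upwards [hmain, eventually_ge_atTop r, hev_β] with N hm hNr hNβ
  have heq₁ : ∫ x, (t - x)⁻¹ ∂(μA N) =
      ∫ x, (t - x) * ((max |t - x| c) ^ 2)⁻¹ ∂(μA N) + (N : ℝ)⁻¹ * C₁ := by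
    rw [hformula N hNr (fun x => (t - x)⁻¹),
      hformula N hNr (fun x => (t - x) * ((max |t - x| c) ^ 2)⁻¹)]
    have hsb : ∑ i ∈ Finset.range (N - r), (t - β N i)⁻¹ =
        ∑ i ∈ Finset.range (N - r), (t - β N i) * ((max |t - β N i| c) ^ 2)⁻¹ :=
      Finset.sum_congr rfl fun i hi => (hg₁eq _ (hNβ i hi)).symm
    have hsθ : ∑ j, (k j : ℝ) * (t - θ j)⁻¹ =
        ∑ j, ((k j : ℝ) * ((t - θ j) * ((max |t - θ j| c) ^ 2)⁻¹) +
          (k j : ℝ) * ((t - θ j)⁻¹ - (t - θ j) * ((max |t - θ j| c) ^ 2)⁻¹)) :=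
      Finset.sum_congr rfl fun j _ => by ring
    rw [hsb, hsθ, Finset.sum_add_distrib, hC1]
    ring
  rw [hm.2.1, hm.2.2, heq₁]
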